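/- Let A be a symmetric positive semidefinite k×k real matrix and let φ_max(m, A) be the largest m-sparse eigenvalue. Then for positive integers ℓ and m one has the sublinearity φ_max(ℓm, A) ≤ ℓ · φ_max(m, A). -/

import Mathlib

open Matrix

/-- The `m`-sparse maximal eigenvalue
`φ_max(m, A) := sup { δᵀAδ : ‖δ‖₀ ≤ m, ‖δ‖₂ = 1 }`. -/
noncomputable def sparseEigMax {k : ℕ} (A : Matrix (Fin k) (Fin k) ℝ) (m : ℝ) : ℝ :=
  sSup {x : ℝ | ∃ δ : Fin k → ℝ,
    ((Finset.univ.filter fun i => δ i ≠ 0).card : ℝ) ≤ m ∧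
    (∑ i, δ i ^ 2) = 1 ∧ x = δ ⬝ᵥ A.mulVec δ}

section Helpers

variable {k : ℕ} (A : Matrix (Fin k) (Fin k) ℝ)

private lemma dp_sum_left {ι : Type*} (s : Finset ι) (v : ι → Fin k → ℝ) (w : Fin k → ℝ) :
    (∑ j ∈ s, v j) ⬝ᵥ w = ∑ j ∈ s, v j ⬝ᵥ w := by
  classical
  induction s using Finset.induction_on with
  | empty => simp
  | insert _ _ h ih => simp [Finset.sum_insert h, add_dotProduct, ih]

private lemma dp_sum_right {ι : Type*} (s : Finset ι) (v : ι → Fin k → ℝ) (w : Fin k → ℝ) :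
    w ⬝ᵥ (∑ j ∈ s, v j) = ∑ j ∈ s, w ⬝ᵥ v j := by
  classical
  induction s using Finset.induction_on with
  | empty => simp
  | insert _ _ h ih => simp [Finset.sum_insert h, dotProduct_add, ih]

private lemma mv_sum {ι : Type*} (s : Finset ι) (v : ι → Fin k → ℝ) :
    A.mulVec (∑ j ∈ s, v j) = ∑ j ∈ s, A.mulVec (v j) := by
  classical
  induction s using Finset.induction_on with
  | empty => simp
  | insert _ _ h ih => simp [Finset.sum_insert h, Matrix.mulVec_add, ih]

private lemma B_symm (hA : A.PosSemidef) (x y : Fin k → ℝ) :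
    x ⬝ᵥ A.mulVec y = y ⬝ᵥ A.mulVec x := by
  rw [Matrix.dotProduct_mulVec, ← Matrix.mulVec_transpose]
  rw [show Aᵀ = A from ?_, dotProduct_comm]
  have := hA.1.eq
  simpa [Matrix.IsHermitian, Matrix.conjTranspose, ← Matrix.ext_iff] using this

private lemma B_nonneg (hA : A.PosSemidef) (x : Fin k → ℝ) :
    0 ≤ x ⬝ᵥ A.mulVec x := by
  simpa using hA.dotProduct_mulVec_nonneg x

/-- The defining set is bounded above. -/
private lemma sparse_bdd (m : ℝ) :
    BddAbove {x : ℝ | ∃ δ : Fin k → ℝ,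
      ((Finset.univ.filter fun i => δ i ≠ 0).card : ℝ) ≤ m ∧
      (∑ i, δ i ^ 2) = 1 ∧ x = δ ⬝ᵥ A.mulVec δ} := by
  refine ⟨∑ i, ∑ j, |A i j|, ?_⟩
  rintro x ⟨δ, -, hnorm, rfl⟩
  have habs : ∀ i, |δ i| ≤ 1 := by
    intro i
    have h1 : δ i ^ 2 ≤ 1 := by
      rw [← hnorm]
      exact Finset.single_le_sum (f := fun i => δ i ^ 2) (fun i _ => sq_nonneg _)
        (Finset.mem_univ i)
    nlinarith [abs_nonneg (δ i), sq_abs (δ i)]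
  calc δ ⬝ᵥ A.mulVec δ = ∑ i, ∑ j, δ i * (A i j * δ j) := by
        simp [dotProduct, Matrix.mulVec, Finset.mul_sum]
    _ ≤ ∑ i, ∑ j, |A i j| := by
        refine Finset.sum_le_sum fun i _ => Finset.sum_le_sum fun j _ => ?_
        calc δ i * (A i j * δ j) ≤ |δ i * (A i j * δ j)| := le_abs_self _
          _ = |δ i| * |A i j| * |δ j| := by rw [abs_mul, abs_mul]; ring
          _ ≤ 1 * |A i j| * 1 :=
              mul_le_mul (mul_le_mul (habs i) le_rfl (abs_nonneg _) zero_le_one)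
                (habs j) (abs_nonneg _) (by positivity)
          _ = |A i j| := by ring

private lemma sparse_nonneg (hk : 0 < k) (hA : A.PosSemidef) (m : ℝ) (h1 : 1 ≤ m) :
    0 ≤ sparseEigMax A m := by
  classical
  set i0 : Fin k := ⟨0, hk⟩
  set δ : Fin k → ℝ := Pi.single i0 1 with hδ
  have hsupp : (Finset.univ.filter fun i => δ i ≠ 0) ⊆ {i0} := by
    intro i hi
    simp only [Finset.mem_filter, Finset.mem_univ, true_and] at hi
    simp only [Finset.mem_singleton]
    by_contra h
    exact hi (by simp [hδ, Pi.single_apply, h])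
  have hcard : ((Finset.univ.filter fun i => δ i ≠ 0).card : ℝ) ≤ m := by
    have := Finset.card_le_card hsupp
    simp only [Finset.card_singleton] at this
    calc ((Finset.univ.filter fun i => δ i ≠ 0).card : ℝ) ≤ 1 := by exact_mod_cast this
      _ ≤ m := h1
  have hnorm : (∑ i, δ i ^ 2) = 1 := by
    have : ∀ i, δ i ^ 2 = if i = i0 then 1 else 0 := by
      intro i; by_cases h : i = i0 <;> simp [hδ, Pi.single_apply, h]
    rw [Finset.sum_congr rfl fun i _ => this i]
    simp
  have hmem : δ ⬝ᵥ A.mulVec δ ∈ {x : ℝ | ∃ δ : Fin k → ℝ,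
      ((Finset.univ.filter fun i => δ i ≠ 0).card : ℝ) ≤ m ∧
      (∑ i, δ i ^ 2) = 1 ∧ x = δ ⬝ᵥ A.mulVec δ} := ⟨δ, hcard, hnorm, rfl⟩
  exact le_trans (B_nonneg A hA δ) (le_csSup (sparse_bdd A m) hmem)

/-- Scaling: for any `δ` with support of size at most `m`,
`δᵀAδ ≤ ‖δ‖² φ_max(m)`. -/
private lemma form_le (hA : A.PosSemidef) (m : ℝ) (δ : Fin k → ℝ)
    (hcard : ((Finset.univ.filter fun i => δ i ≠ 0).card : ℝ) ≤ m) :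
    δ ⬝ᵥ A.mulVec δ ≤ (∑ i, δ i ^ 2) * sparseEigMax A m := by
  classical
  have hsumnn : 0 ≤ ∑ i, δ i ^ 2 := Finset.sum_nonneg fun i _ => sq_nonneg _
  by_cases h0 : (∑ i, δ i ^ 2) = 0
  · have hz : ∀ i ∈ Finset.univ, δ i ^ 2 = 0 :=
      (Finset.sum_eq_zero_iff_of_nonneg fun i _ => sq_nonneg _).1 h0
    have : δ = 0 := funext fun i => by
      have := hz i (Finset.mem_univ i); exact pow_eq_zero_iff (n := 2) (by norm_num) |>.1 this
    rw [this]
    simp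
  · set c : ℝ := Real.sqrt (∑ i, δ i ^ 2) with hc
    have hcpos : 0 < c := Real.sqrt_pos.2 (lt_of_le_of_ne hsumnn (Ne.symm h0))
    have hc2 : c ^ 2 = ∑ i, δ i ^ 2 := Real.sq_sqrt hsumnn
    set u : Fin k → ℝ := fun i => δ i / c with hu
    have hsupp : (Finset.univ.filter fun i => u i ≠ 0)
        = (Finset.univ.filter fun i => δ i ≠ 0) := by
      apply Finset.filter_congr
      intro i _
      simp [hu, div_eq_zero_iff, hcpos.ne']
    have hnorm : (∑ i, u i ^ 2) = 1 := by
      simp only [hu, div_pow]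
      rw [← Finset.sum_div, ← hc2, div_self (by positivity)]
    have hmem : u ⬝ᵥ A.mulVec u ∈ {x : ℝ | ∃ δ : Fin k → ℝ,
        ((Finset.univ.filter fun i => δ i ≠ 0).card : ℝ) ≤ m ∧
        (∑ i, δ i ^ 2) = 1 ∧ x = δ ⬝ᵥ A.mulVec δ} :=
      ⟨u, by rw [hsupp]; exact hcard, hnorm, rfl⟩
    have hle : u ⬝ᵥ A.mulVec u ≤ sparseEigMax A m := le_csSup (sparse_bdd A m) hmem
    have hδu : δ = c • u := funext fun i => by
      simp [hu, smul_eq_mul]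
      field_simp
    have hq : δ ⬝ᵥ A.mulVec δ = (∑ i, δ i ^ 2) * (u ⬝ᵥ A.mulVec u) := by
      conv_lhs => rw [hδu]
      rw [Matrix.mulVec_smul, smul_dotProduct, dotProduct_smul,
        smul_eq_mul, smul_eq_mul, ← mul_assoc, ← sq, hc2]
    rw [hq]
    exact mul_le_mul_of_nonneg_left hle hsumnn

/-- Convexity bound: `(∑ vⱼ)ᵀ A (∑ vⱼ) ≤ |s| ∑ vⱼᵀ A vⱼ`. -/
private lemma quad_sum (hA : A.PosSemidef) {ι : Type*} (s : Finset ι) (v : ι → Fin k → ℝ) :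
    (∑ j ∈ s, v j) ⬝ᵥ A.mulVec (∑ j ∈ s, v j)
      ≤ (s.card : ℝ) * ∑ j ∈ s, v j ⬝ᵥ A.mulVec (v j) := by
  classical
  set Q : ℝ := ∑ j ∈ s, v j ⬝ᵥ A.mulVec (v j) with hQ
  set C : ℝ := ∑ i ∈ s, ∑ j ∈ s, v i ⬝ᵥ A.mulVec (v j) with hC
  have key : (0:ℝ) ≤ ∑ i ∈ s, ∑ j ∈ s, (v i - v j) ⬝ᵥ A.mulVec (v i - v j) :=
    Finset.sum_nonneg fun i _ => Finset.sum_nonneg fun j _ => B_nonneg A hA _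
  have expand : ∀ i j, (v i - v j) ⬝ᵥ A.mulVec (v i - v j)
      = v i ⬝ᵥ A.mulVec (v i) + v j ⬝ᵥ A.mulVec (v j) - 2 * (v i ⬝ᵥ A.mulVec (v j)) := by
    intro i j
    rw [Matrix.mulVec_sub, sub_dotProduct, dotProduct_sub,
      dotProduct_sub, B_symm A hA (v j) (v i)]
    ring
  have key2 : (0:ℝ) ≤ (s.card : ℝ) * Q + (s.card : ℝ) * Q - 2 * C := by
    have e1 : ∑ i ∈ s, ∑ j ∈ s, (v i - v j) ⬝ᵥ A.mulVec (v i - v j)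
        = (s.card : ℝ) * Q + (s.card : ℝ) * Q - 2 * C := by
      rw [Finset.sum_congr rfl fun i _ => Finset.sum_congr rfl fun j _ => expand i j]
      simp only [Finset.sum_add_distrib, Finset.sum_sub_distrib, Finset.sum_const,
        nsmul_eq_mul, ← Finset.mul_sum, ← Finset.sum_mul]
      rfl
    linarith [e1 ▸ key]
  have lhs_eq : (∑ j ∈ s, v j) ⬝ᵥ A.mulVec (∑ j ∈ s, v j) = C := by
    rw [mv_sum, dp_sum_left, hC]
    exact Finset.sum_congr rfl fun i _ => dp_sum_right s (fun j => A.mulVec (v j)) (v i)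
  rw [lhs_eq]
  linarith

end Helpers

/-- Sublinearity of the sparse maximal eigenvalue: for a symmetric positive
semidefinite matrix `A` and positive integers `ℓ, m`,
`φ_max(ℓm, A) ≤ ℓ · φ_max(m, A)`. -/
theorem stmt_8 {k : ℕ} (hk : 0 < k) (A : Matrix (Fin k) (Fin k) ℝ)
    (hA : A.PosSemidef) (l m : ℕ) (hl : 0 < l) (hm : 0 < m) :
    sparseEigMax A ((l * m : ℕ) : ℝ) ≤ (l : ℝ) * sparseEigMax A (m : ℝ) := by
  classical
  have hnn : 0 ≤ sparseEigMax A (m : ℝ) :=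
    sparse_nonneg A hk hA _ (by exact_mod_cast hm)
  apply Real.sSup_le
  · rintro x ⟨δ, hcard, hnorm, rfl⟩
    set S := Finset.univ.filter fun i => δ i ≠ 0 with hS
    have hScard : S.card ≤ l * m := by exact_mod_cast hcard
    set r : Fin k → ℕ := fun i => (S.filter fun i' => i' < i).card with hr
    have hrmono : ∀ a b : Fin k, a ∈ S → a < b → r a < r b := by
      intro a b ha hab
      apply Finset.card_lt_card
      have hsub : (S.filter fun i' => i' < a) ⊆ S.filter fun i' => i' < b := by
        intro x hx
        rw [Finset.mem_filter] at hx ⊢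
        exact ⟨hx.1, lt_trans hx.2 hab⟩
      rw [Finset.ssubset_iff_of_subset hsub]
      exact ⟨a, Finset.mem_filter.2 ⟨ha, hab⟩,
        fun hmem => absurd (Finset.mem_filter.1 hmem).2 (lt_irrefl a)⟩
    have hrinj : ∀ a ∈ S, ∀ b ∈ S, r a = r b → a = b := by
      intro a ha b hb hab
      rcases lt_trichotomy a b with h | h | h
      · exact absurd hab (hrmono a b ha h).ne
      · exact h
      · exact absurd hab.symm (hrmono b a hb h).ne
    have hrlt : ∀ i ∈ S, r i < l * m := by
      intro i hi
      have h1 : r i < S.card := by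
        apply Finset.card_lt_card
        rw [Finset.ssubset_iff_of_subset (Finset.filter_subset _ _)]
        exact ⟨i, hi, by simp⟩
      exact lt_of_lt_of_le h1 hScard
    set piece : ℕ → Fin k → ℝ := fun j i => if r i / m = j then δ i else 0 with hpiece
    have hδeq : δ = ∑ j ∈ Finset.range l, piece j := by
      funext i
      rw [Finset.sum_apply]
      by_cases h : δ i = 0
      · simp [hpiece, h]
      · have hiS : i ∈ S := by simp [hS, h]
        have hlt : r i / m < l := (Nat.div_lt_iff_lt_mul hm).2 (hrlt i hiS)
        simp only [hpiece]
        rw [Finset.sum_ite_eq (Finset.range l) (r i / m) (fun _ => δ i)]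
        simp [Finset.mem_range.2 hlt]
    have hpiececard : ∀ j, ((Finset.univ.filter fun i => piece j i ≠ 0).card : ℝ) ≤ (m : ℝ) := by
      intro j
      have hsub : (Finset.univ.filter fun i => piece j i ≠ 0)
          ⊆ S.filter fun i => r i / m = j := by
        intro i hi
        simp only [Finset.mem_filter, Finset.mem_univ, true_and, hpiece] at hi
        by_cases hij : r i / m = j
        · simp only [hij, if_true] at hi
          exact Finset.mem_filter.2 ⟨by simp [hS, hi], hij⟩
        · simp [hij] at hi
      have h2 : (S.filter fun i => r i / m = j).card ≤ m := by
        have hmaps : ∀ i ∈ S.filter fun i => r i / m = j,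
            r i ∈ Finset.Ico (j * m) (j * m + m) := by
          intro i hi
          obtain ⟨hiS, hij⟩ := Finset.mem_filter.1 hi
          rw [Finset.mem_Ico]
          refine ⟨(Nat.le_div_iff_mul_le hm).1 (le_of_eq hij.symm), ?_⟩
          have h1 : r i / m < j + 1 := by rw [hij]; exact Nat.lt_succ_self j
          have h2 := (Nat.div_lt_iff_lt_mul hm).1 h1
          calc r i < (j + 1) * m := h2
            _ = j * m + m := by rw [Nat.succ_mul]
        have hinj : Set.InjOn r (S.filter fun i => r i / m = j) := fun a ha b hb hab =>
          hrinj a (Finset.mem_filter.1 ha).1 b (Finset.mem_filter.1 hb).1 hab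
        have := Finset.card_le_card_of_injOn r hmaps hinj
        simpa using this
      calc ((Finset.univ.filter fun i => piece j i ≠ 0).card : ℝ)
          ≤ ((S.filter fun i => r i / m = j).card : ℝ) := by
            exact_mod_cast Finset.card_le_card hsub
        _ ≤ (m : ℝ) := by exact_mod_cast h2
    have hnormsum : ∑ j ∈ Finset.range l, (∑ i, piece j i ^ 2) = 1 := by
      rw [Finset.sum_comm, ← hnorm]
      refine Finset.sum_congr rfl fun i _ => ?_
      by_cases h : δ i = 0
      · simp [hpiece, h]
      · have hiS : i ∈ S := by simp [hS, h]
        have hlt : r i / m < l := (Nat.div_lt_iff_lt_mul hm).2 (hrlt i hiS)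
        simp only [hpiece, apply_ite (· ^ 2)]
        rw [show ((0:ℝ) ^ 2) = 0 from by norm_num]
        rw [Finset.sum_ite_eq (Finset.range l) (r i / m) (fun _ => δ i ^ 2)]
        simp [Finset.mem_range.2 hlt]
    calc δ ⬝ᵥ A.mulVec δ
        = (∑ j ∈ Finset.range l, piece j) ⬝ᵥ
            A.mulVec (∑ j ∈ Finset.range l, piece j) := by rw [← hδeq]
      _ ≤ ((Finset.range l).card : ℝ) * ∑ j ∈ Finset.range l,
            piece j ⬝ᵥ A.mulVec (piece j) := quad_sum A hA _ _
      _ ≤ (l : ℝ) * ∑ j ∈ Finset.range l,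
            (∑ i, piece j i ^ 2) * sparseEigMax A (m : ℝ) := by
          rw [Finset.card_range]
          exact mul_le_mul_of_nonneg_left
            (Finset.sum_le_sum fun j _ => form_le A hA (m : ℝ) (piece j) (hpiececard j))
            (by positivity)
      _ = (l : ℝ) * sparseEigMax A (m : ℝ) := by
          rw [← Finset.sum_mul, hnormsum, one_mul]
  · exact mul_nonneg (by positivity) hnn
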